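/- Minimization of a convex quadratic functional of a control function: let ν be a probability measure on ℝ^d, let N, Λ be symmetric positive semidefinite d×d matrices, R symmetric positive definite, and let φ : ℝ^d → ℝ^d be square-integrable with respect to ν and w ∈ ℝ^d. Then the functional F(a) = (∫a dν)ᵀ N (∫a dν) + 2 wᵀ (∫ a dν) + 2 ∫ φ(y)ᵀ Λ' a(y) dν(y) + ∫ a(y)ᵀ (Λ + R) a(y) dν(y), defined for a ∈ L²(ν; ℝ^d), is continuous, coercive (F(a) → +∞ as ‖a‖_{L²(ν)} → ∞), strictly convex, and admits a unique global minimizer characterized by the first-order condition N (∫ a dν) + w + (Λ')ᵀ φ(y) + (Λ + R) a(y) = 0 for ν-a.e. y. -/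

import Mathlib

open MeasureTheory Matrix Filter

set_option linter.unusedSectionVars false
set_option maxHeartbeats 1000000

section aux2
variable {d : ℕ}

lemma dot_mulVec_eq' (M : Matrix (Fin d) (Fin d) ℝ) (x v : Fin d → ℝ) :
    x ⬝ᵥ M.mulVec v = ∑ i, ∑ j, M i j * (x i * v j) := by
  simp only [dotProduct, mulVec, Finset.mul_sum]
  exact Finset.sum_congr rfl fun i _ => Finset.sum_congr rfl fun j _ => by ring

lemma dot_self_nonneg (x : Fin d → ℝ) : 0 ≤ x ⬝ᵥ x :=
  Finset.sum_nonneg fun i _ => mul_self_nonneg (x i)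

lemma dot_symm (M : Matrix (Fin d) (Fin d) ℝ) (hM : Mᵀ = M) (x y : Fin d → ℝ) :
    x ⬝ᵥ M.mulVec y = y ⬝ᵥ M.mulVec x := by
  rw [dot_mulVec_eq', dot_mulVec_eq', Finset.sum_comm]
  refine Finset.sum_congr rfl fun i _ => Finset.sum_congr rfl fun j _ => ?_
  have hij : M j i = M i j := by conv_rhs => rw [← hM, Matrix.transpose_apply]
  rw [hij]; ring

lemma transpose_dot (A : Matrix (Fin d) (Fin d) ℝ) (x y : Fin d → ℝ) :
    Aᵀ.mulVec x ⬝ᵥ y = x ⬝ᵥ A.mulVec y := by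
  rw [dotProduct_comm, dot_mulVec_eq', dot_mulVec_eq', Finset.sum_comm]
  refine Finset.sum_congr rfl fun i _ => Finset.sum_congr rfl fun j _ => ?_
  rw [Matrix.transpose_apply]; ring

lemma psd_nonneg {N : Matrix (Fin d) (Fin d) ℝ} (hN : N.PosSemidef) (x : Fin d → ℝ) :
    0 ≤ x ⬝ᵥ N.mulVec x := by simpa using hN.dotProduct_mulVec_nonneg x

lemma hermit_transpose {N : Matrix (Fin d) (Fin d) ℝ} (hN : N.IsHermitian) : Nᵀ = N := by
  simpa [Matrix.conjTranspose, Matrix.transpose_map, Matrix.IsSymm] using hN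

lemma continuous_dotM (M : Matrix (Fin d) (Fin d) ℝ) :
    Continuous fun x : Fin d → ℝ => x ⬝ᵥ M.mulVec x := by
  simp only [dot_mulVec_eq']
  exact continuous_finset_sum _ fun i _ => continuous_finset_sum _ fun j _ =>
    continuous_const.mul ((continuous_apply i).mul (continuous_apply j))

lemma posdef_lower {M : Matrix (Fin d) (Fin d) ℝ} (hM : M.PosDef) :
    ∃ c : ℝ, 0 < c ∧ ∀ x : Fin d → ℝ, c * (x ⬝ᵥ x) ≤ x ⬝ᵥ M.mulVec x := by
  have hMpos : ∀ x : Fin d → ℝ, x ≠ 0 → 0 < x ⬝ᵥ M.mulVec x := fun x hx => by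
    simpa using hM.dotProduct_mulVec_pos hx
  rcases Nat.eq_zero_or_pos d with hd | hd
  · subst hd
    exact ⟨1, one_pos, fun x => by
      have : x = 0 := Subsingleton.elim _ _
      simp [this]⟩
  · set K : Set (Fin d → ℝ) := {x | x ⬝ᵥ x = 1} with hK
    have hcont2 : Continuous fun x : Fin d → ℝ => x ⬝ᵥ x := by
      simp only [dotProduct]
      exact continuous_finset_sum _ fun i _ => (continuous_apply i).mul (continuous_apply i)
    have hclosed : IsClosed K := isClosed_singleton.preimage hcont2
    have hbdd : Bornology.IsBounded K := by
      refine (Metric.isBounded_closedBall (x := (0 : Fin d → ℝ)) (r := 1)).subset ?_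
      intro x hx
      have hx1 : x ⬝ᵥ x = 1 := hx
      simp only [Metric.mem_closedBall, dist_zero_right]
      rw [pi_norm_le_iff_of_nonneg zero_le_one]
      intro i
      have h1 : x i * x i ≤ 1 := by
        have := Finset.single_le_sum (f := fun j => x j * x j)
          (fun j _ => mul_self_nonneg (x j)) (Finset.mem_univ i)
        calc x i * x i ≤ x ⬝ᵥ x := this
          _ = 1 := hx1
      rw [Real.norm_eq_abs, abs_le]
      constructor <;> nlinarith
    have hcompact : IsCompact K := Metric.isCompact_of_isClosed_isBounded hclosed hbdd
    have hne : K.Nonempty := by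
      refine ⟨Pi.single ⟨0, hd⟩ 1, ?_⟩
      show _ ⬝ᵥ _ = 1
      simp [dotProduct, Pi.single_apply]
    obtain ⟨z, hzK, hzmin'⟩ := hcompact.exists_isMinOn hne (continuous_dotM M).continuousOn
    have hzmin : ∀ u, u ⬝ᵥ u = 1 → z ⬝ᵥ M.mulVec z ≤ u ⬝ᵥ M.mulVec u := fun u hu => hzmin' hu
    have hz1 : z ⬝ᵥ z = 1 := hzK
    have hzne : z ≠ 0 := fun h => by simp [h] at hz1
    refine ⟨z ⬝ᵥ M.mulVec z, hMpos z hzne, fun x => ?_⟩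
    rcases eq_or_ne x 0 with rfl | hx
    · simp
    · have hs : 0 < x ⬝ᵥ x := by
        rcases lt_or_eq_of_le (dot_self_nonneg x) with h | h
        · exact h
        · exact absurd (dotProduct_self_eq_zero.mp h.symm) hx
      have hsq : Real.sqrt (x ⬝ᵥ x) * Real.sqrt (x ⬝ᵥ x) = x ⬝ᵥ x :=
        Real.mul_self_sqrt hs.le
      have hsqpos : 0 < Real.sqrt (x ⬝ᵥ x) := Real.sqrt_pos.mpr hs
      set t : ℝ := (Real.sqrt (x ⬝ᵥ x))⁻¹ with ht
      have htpos : 0 < t := inv_pos.mpr hsqpos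
      have huu : (t • x) ⬝ᵥ (t • x) = 1 := by
        rw [smul_dotProduct, dotProduct_smul, smul_eq_mul, smul_eq_mul, ht]
        field_simp
        rw [Real.sq_sqrt hs.le]
      have hmin := hzmin (t • x) huu
      have hform : (t • x) ⬝ᵥ M.mulVec (t • x) = t * t * (x ⬝ᵥ M.mulVec x) := by
        rw [M.mulVec_smul, smul_dotProduct, dotProduct_smul, smul_eq_mul, smul_eq_mul]
        ring
      rw [hform] at hmin
      have htt : t * t * (x ⬝ᵥ x) = 1 := by
        rw [ht]; field_simp
        rw [Real.sq_sqrt hs.le]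
      have h1 := mul_le_mul_of_nonneg_right hmin hs.le
      have h2 : (t * t * (x ⬝ᵥ M.mulVec x)) * (x ⬝ᵥ x)
          = (x ⬝ᵥ M.mulVec x) * (t * t * (x ⬝ᵥ x)) := by ring
      rw [htt, mul_one] at h2
      rw [h2] at h1
      linarith [h1]


section aux1
variable {d : ℕ} {ν : Measure (Fin d → ℝ)} [IsProbabilityMeasure ν]

lemma memLp_coord {a : (Fin d → ℝ) → (Fin d → ℝ)} (ha : MemLp a 2 ν) (i : Fin d) :
    MemLp (fun y => a y i) 2 ν :=
  ha.of_le ((continuous_apply i).comp_aestronglyMeasurable ha.1)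
    (Filter.Eventually.of_forall fun y => norm_le_pi_norm (a y) i)

lemma integrable_coord {a : (Fin d → ℝ) → (Fin d → ℝ)} (ha : MemLp a 2 ν) (i : Fin d) :
    Integrable (fun y => a y i) ν :=
  (memLp_coord ha i).integrable one_le_two

lemma memLp_mul {f g : (Fin d → ℝ) → ℝ} (hf : MemLp f 2 ν) (hg : MemLp g 2 ν) :
    Integrable (fun y => f y * g y) ν := by
  rw [← memLp_one_iff_integrable]
  have := hg.smul hf (p := 2) (q := 2) (r := 1)
  exact this

lemma integrable_coord_mul {a b : (Fin d → ℝ) → (Fin d → ℝ)} (ha : MemLp a 2 ν)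
    (hb : MemLp b 2 ν) (i j : Fin d) :
    Integrable (fun y => a y i * b y j) ν :=
  memLp_mul (memLp_coord ha i) (memLp_coord hb j)

lemma dot_mulVec_eq (M : Matrix (Fin d) (Fin d) ℝ) (x v : Fin d → ℝ) :
    x ⬝ᵥ M.mulVec v = ∑ i, ∑ j, M i j * (x i * v j) := by
  simp only [dotProduct, mulVec, Finset.mul_sum]
  exact Finset.sum_congr rfl fun i _ => Finset.sum_congr rfl fun j _ => by ring

lemma integrable_dotM (M : Matrix (Fin d) (Fin d) ℝ) {a b : (Fin d → ℝ) → (Fin d → ℝ)}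
    (ha : MemLp a 2 ν) (hb : MemLp b 2 ν) :
    Integrable (fun y => a y ⬝ᵥ M.mulVec (b y)) ν := by
  simp only [dot_mulVec_eq]
  exact integrable_finset_sum _ fun i _ => integrable_finset_sum _ fun j _ =>
    (integrable_coord_mul ha hb i j).const_mul _

lemma integrable_dot {a b : (Fin d → ℝ) → (Fin d → ℝ)}
    (ha : MemLp a 2 ν) (hb : MemLp b 2 ν) :
    Integrable (fun y => a y ⬝ᵥ b y) ν := by
  simp only [dotProduct]
  exact integrable_finset_sum _ fun i _ => integrable_coord_mul ha hb i i

lemma integral_dotM (M : Matrix (Fin d) (Fin d) ℝ) {a b : (Fin d → ℝ) → (Fin d → ℝ)}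
    (ha : MemLp a 2 ν) (hb : MemLp b 2 ν) :
    ∫ y, a y ⬝ᵥ M.mulVec (b y) ∂ν = ∑ i, ∑ j, M i j * ∫ y, a y i * b y j ∂ν := by
  simp only [dot_mulVec_eq]
  rw [integral_finset_sum _ (f := fun i y => ∑ j, M i j * (a y i * b y j)) fun i _ => integrable_finset_sum _ fun j _ =>
    (integrable_coord_mul ha hb i j).const_mul _]
  exact Finset.sum_congr rfl fun i _ => by
    rw [integral_finset_sum _ fun j _ => (integrable_coord_mul ha hb i j).const_mul _]
    exact Finset.sum_congr rfl fun j _ => integral_const_mul _ _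

lemma integral_dot_eq {a b : (Fin d → ℝ) → (Fin d → ℝ)}
    (ha : MemLp a 2 ν) (hb : MemLp b 2 ν) :
    ∫ y, a y ⬝ᵥ b y ∂ν = ∑ i, ∫ y, a y i * b y i ∂ν := by
  simp only [dotProduct]
  exact integral_finset_sum _ fun i _ => integrable_coord_mul ha hb i i

lemma integral_const_dot (c : Fin d → ℝ) {b : (Fin d → ℝ) → (Fin d → ℝ)}
    (hb : MemLp b 2 ν) :
    ∫ y, c ⬝ᵥ b y ∂ν = c ⬝ᵥ (fun i => ∫ y, b y i ∂ν) := by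
  rw [integral_dot_eq (memLp_const c) hb]
  exact Finset.sum_congr rfl fun i _ => integral_const_mul _ _

-- Cauchy-Schwarz
lemma integral_mul_sq_le {f g : (Fin d → ℝ) → ℝ} (hf : MemLp f 2 ν) (hg : MemLp g 2 ν) :
    (∫ y, f y * g y ∂ν) ^ 2 ≤ (∫ y, f y * f y ∂ν) * ∫ y, g y * g y ∂ν := by
  have hff : Integrable (fun y => f y * f y) ν := memLp_mul hf hf
  have hgg : Integrable (fun y => g y * g y) ν := memLp_mul hg hg
  have hfg : Integrable (fun y => f y * g y) ν := memLp_mul hf hg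
  have key : ∀ t : ℝ, 0 ≤ (∫ y, f y * f y ∂ν) * (t * t)
      + (2 * ∫ y, f y * g y ∂ν) * t + ∫ y, g y * g y ∂ν := by
    intro t
    have h0 : 0 ≤ ∫ y, (t * f y + g y) * (t * f y + g y) ∂ν :=
      integral_nonneg fun y => mul_self_nonneg _
    have h1 : Integrable (fun y => (t * t) * (f y * f y) + (2 * t) * (f y * g y)) ν :=
      (hff.const_mul _).add (hfg.const_mul _)
    have hexp : ∫ y, (t * f y + g y) * (t * f y + g y) ∂ν
        = (∫ y, f y * f y ∂ν) * (t * t) + (2 * ∫ y, f y * g y ∂ν) * t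
          + ∫ y, g y * g y ∂ν := by
      have hpt : ∀ y, (t * f y + g y) * (t * f y + g y)
          = ((t * t) * (f y * f y) + (2 * t) * (f y * g y)) + g y * g y := fun y => by ring
      simp_rw [hpt]
      rw [integral_add h1 hgg, integral_add (hff.const_mul _) (hfg.const_mul _),
        integral_const_mul, integral_const_mul]
      ring
    linarith [hexp ▸ h0]
  have hd := discrim_le_zero key
  rw [discrim] at hd
  nlinarith [hd]




/-- The quadratic functional
`F(a) = (∫a dν)ᵀ N (∫a dν) + 2 wᵀ(∫a dν) + 2∫ φᵀ Λ' a dν + ∫ aᵀ(Λ+R)a dν`. -/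
noncomputable def quadControlFunctional (d : ℕ) (ν : Measure (Fin d → ℝ))
    (N Λ R Λ' : Matrix (Fin d) (Fin d) ℝ)
    (φ : (Fin d → ℝ) → (Fin d → ℝ)) (w : Fin d → ℝ)
    (a : (Fin d → ℝ) → (Fin d → ℝ)) : ℝ :=
  (fun i => ∫ y, a y i ∂ν) ⬝ᵥ N.mulVec (fun i => ∫ y, a y i ∂ν)
    + 2 * (w ⬝ᵥ (fun i => ∫ y, a y i ∂ν))
    + 2 * (∫ y, φ y ⬝ᵥ Λ'.mulVec (a y) ∂ν)
    + ∫ y, a y ⬝ᵥ (Λ + R).mulVec (a y) ∂ν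

section expandsec
variable {d : ℕ} {ν : Measure (Fin d → ℝ)} [IsProbabilityMeasure ν]

lemma memLp_mulVec (B : Matrix (Fin d) (Fin d) ℝ) {φ : (Fin d → ℝ) → (Fin d → ℝ)}
    (hφ : MemLp φ 2 ν) : MemLp (fun y => B.mulVec (φ y)) 2 ν := by
  set K : ℝ := ∑ i, ∑ j, |B i j| with hKdef
  have hK0 : 0 ≤ K := Finset.sum_nonneg fun i _ => Finset.sum_nonneg fun j _ => abs_nonneg _
  have hmeas : AEStronglyMeasurable (fun y => B.mulVec (φ y)) ν := by
    have hc : Continuous fun v : Fin d → ℝ => B.mulVec v := by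
      refine continuous_pi fun i => ?_
      simp only [mulVec, dotProduct]
      exact continuous_finset_sum _ fun j _ => continuous_const.mul (continuous_apply j)
    exact hc.comp_aestronglyMeasurable hφ.1
  have hbound : ∀ y, ‖B.mulVec (φ y)‖ ≤ ‖K * ‖φ y‖‖ := by
    intro y
    have hKn : ‖K * ‖φ y‖‖ = K * ‖φ y‖ := by
      rw [Real.norm_eq_abs, abs_of_nonneg (mul_nonneg hK0 (norm_nonneg _))]
    rw [hKn, pi_norm_le_iff_of_nonneg (mul_nonneg hK0 (norm_nonneg _))]
    intro i
    have h1 : ‖B.mulVec (φ y) i‖ ≤ ∑ j, |B i j| * ‖φ y‖ := by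
      rw [Real.norm_eq_abs]
      simp only [mulVec, dotProduct]
      refine (Finset.abs_sum_le_sum_abs _ _).trans ?_
      refine Finset.sum_le_sum fun j _ => ?_
      rw [abs_mul]
      exact mul_le_mul_of_nonneg_left (norm_le_pi_norm (φ y) j) (abs_nonneg _)
    refine h1.trans ?_
    rw [← Finset.sum_mul]
    refine mul_le_mul_of_nonneg_right ?_ (norm_nonneg _)
    exact Finset.single_le_sum (f := fun i => ∑ j, |B i j|)
      (fun i _ => Finset.sum_nonneg fun j _ => abs_nonneg _) (Finset.mem_univ i)
  exact (hφ.norm.const_mul K).of_le hmeas (Filter.Eventually.of_forall hbound)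

lemma expandF (N Λ R Λ' : Matrix (Fin d) (Fin d) ℝ)
    (φ : (Fin d → ℝ) → (Fin d → ℝ)) (w : Fin d → ℝ)
    (hNT : Nᵀ = N) (hMT : (Λ + R)ᵀ = Λ + R) (hφ : MemLp φ 2 ν)
    {b h : (Fin d → ℝ) → (Fin d → ℝ)} (hb : MemLp b 2 ν) (hh : MemLp h 2 ν) :
    quadControlFunctional d ν N Λ R Λ' φ w (fun y => b y + h y)
      = quadControlFunctional d ν N Λ R Λ' φ w b
        + ((fun i => ∫ y, h y i ∂ν) ⬝ᵥ N.mulVec (fun i => ∫ y, h y i ∂ν)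
           + ∫ y, h y ⬝ᵥ (Λ + R).mulVec (h y) ∂ν)
        + 2 * ∫ y, (N.mulVec (fun i => ∫ y', b y' i ∂ν) + w + Λ'ᵀ.mulVec (φ y)
            + (Λ + R).mulVec (b y)) ⬝ᵥ h y ∂ν := by
  have hswapM : ∀ x y : Fin d → ℝ, (Λ + R).mulVec x ⬝ᵥ y = x ⬝ᵥ (Λ + R).mulVec y := by
    intro x y
    rw [← hMT, transpose_dot, hMT]
  have hswapN : ∀ x y : Fin d → ℝ, N.mulVec x ⬝ᵥ y = x ⬝ᵥ N.mulVec y := by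
    intro x y
    rw [← hNT, transpose_dot, hNT]
  simp only [quadControlFunctional, Pi.add_apply]
  set mb : Fin d → ℝ := (fun i => ∫ y, b y i ∂ν) with hmb
  set mh : Fin d → ℝ := (fun i => ∫ y, h y i ∂ν) with hmh
  have hmean : (fun i => ∫ y, b y i + h y i ∂ν) = mb + mh := by
    funext i
    exact integral_add (integrable_coord hb i) (integrable_coord hh i)
  rw [hmean]
  -- T3
  have hT3 : (∫ y, φ y ⬝ᵥ Λ'.mulVec (b y + h y) ∂ν)
      = (∫ y, φ y ⬝ᵥ Λ'.mulVec (b y) ∂ν) + ∫ y, φ y ⬝ᵥ Λ'.mulVec (h y) ∂ν := by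
    simp_rw [Matrix.mulVec_add, dotProduct_add]
    exact integral_add (integrable_dotM Λ' hφ hb) (integrable_dotM Λ' hφ hh)
  -- T4
  have hT4 : (∫ y, (b y + h y) ⬝ᵥ (Λ + R).mulVec (b y + h y) ∂ν)
      = (∫ y, b y ⬝ᵥ (Λ + R).mulVec (b y) ∂ν) + 2 * (∫ y, b y ⬝ᵥ (Λ + R).mulVec (h y) ∂ν)
        + ∫ y, h y ⬝ᵥ (Λ + R).mulVec (h y) ∂ν := by
    have hpt : ∀ y, (b y + h y) ⬝ᵥ (Λ + R).mulVec (b y + h y)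
        = b y ⬝ᵥ (Λ + R).mulVec (b y) + 2 * (b y ⬝ᵥ (Λ + R).mulVec (h y))
          + h y ⬝ᵥ (Λ + R).mulVec (h y) := by
      intro y
      simp only [Matrix.mulVec_add, dotProduct_add, add_dotProduct]
      rw [dot_symm (Λ + R) hMT (h y) (b y)]
      ring
    simp_rw [hpt]
    have i1 : Integrable (fun y => b y ⬝ᵥ (Λ + R).mulVec (b y)
        + 2 * (b y ⬝ᵥ (Λ + R).mulVec (h y))) ν :=
      (integrable_dotM _ hb hb).add ((integrable_dotM _ hb hh).const_mul 2)
    rw [integral_add i1 (integrable_dotM _ hh hh),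
      integral_add (integrable_dotM _ hb hb) ((integrable_dotM _ hb hh).const_mul 2),
      integral_const_mul]
  -- L term
  have hL : (∫ y, (N.mulVec mb + w + Λ'ᵀ.mulVec (φ y) + (Λ + R).mulVec (b y)) ⬝ᵥ h y ∂ν)
      = (N.mulVec mb + w) ⬝ᵥ mh + (∫ y, φ y ⬝ᵥ Λ'.mulVec (h y) ∂ν)
        + ∫ y, b y ⬝ᵥ (Λ + R).mulVec (h y) ∂ν := by
    have hpt : ∀ y, (N.mulVec mb + w + Λ'ᵀ.mulVec (φ y) + (Λ + R).mulVec (b y)) ⬝ᵥ h y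
        = (N.mulVec mb + w) ⬝ᵥ h y + φ y ⬝ᵥ Λ'.mulVec (h y)
          + b y ⬝ᵥ (Λ + R).mulVec (h y) := by
      intro y
      rw [add_dotProduct, add_dotProduct, transpose_dot, hswapM (b y) (h y)]
    simp_rw [hpt]
    have i1 : Integrable (fun y => (N.mulVec mb + w) ⬝ᵥ h y + φ y ⬝ᵥ Λ'.mulVec (h y)) ν :=
      (integrable_dot (memLp_const _) hh).add (integrable_dotM Λ' hφ hh)
    rw [integral_add i1 (integrable_dotM _ hb hh),
      integral_add (integrable_dot (memLp_const _) hh) (integrable_dotM Λ' hφ hh),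
      integral_const_dot _ hh]
  rw [hT3, hT4, hL]
  -- mean terms
  simp only [Matrix.mulVec_add, dotProduct_add, add_dotProduct]
  rw [dot_symm N hNT mh mb, hswapN mb mh]
  ring
end expandsec

noncomputable def Qf (d : ℕ) (ν : Measure (Fin d → ℝ)) (N Λ R : Matrix (Fin d) (Fin d) ℝ)
    (h : (Fin d → ℝ) → (Fin d → ℝ)) : ℝ :=
  (fun i => ∫ y, h y i ∂ν) ⬝ᵥ N.mulVec (fun i => ∫ y, h y i ∂ν)
    + ∫ y, h y ⬝ᵥ (Λ + R).mulVec (h y) ∂ν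

noncomputable def Lf (d : ℕ) (ν : Measure (Fin d → ℝ)) (N Λ R Λ' : Matrix (Fin d) (Fin d) ℝ)
    (φ : (Fin d → ℝ) → (Fin d → ℝ)) (w : Fin d → ℝ)
    (b h : (Fin d → ℝ) → (Fin d → ℝ)) : ℝ :=
  ∫ y, (N.mulVec (fun i => ∫ y', b y' i ∂ν) + w + Λ'ᵀ.mulVec (φ y)
      + (Λ + R).mulVec (b y)) ⬝ᵥ h y ∂ν

section mainsec
variable {d : ℕ} {ν : Measure (Fin d → ℝ)} [IsProbabilityMeasure ν]
variable {N Λ R Λ' : Matrix (Fin d) (Fin d) ℝ} {φ : (Fin d → ℝ) → (Fin d → ℝ)} {w : Fin d → ℝ}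

lemma expandF' (hNT : Nᵀ = N) (hMT : (Λ + R)ᵀ = Λ + R) (hφ : MemLp φ 2 ν)
    {b h : (Fin d → ℝ) → (Fin d → ℝ)} (hb : MemLp b 2 ν) (hh : MemLp h 2 ν) :
    quadControlFunctional d ν N Λ R Λ' φ w (fun y => b y + h y)
      = quadControlFunctional d ν N Λ R Λ' φ w b + Qf d ν N Λ R h
        + 2 * Lf d ν N Λ R Λ' φ w b h :=
  expandF N Λ R Λ' φ w hNT hMT hφ hb hh

lemma Qf_nonneg (hN : N.PosSemidef) (hM : (Λ + R).PosSemidef)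
    {h : (Fin d → ℝ) → (Fin d → ℝ)} : 0 ≤ Qf d ν N Λ R h :=
  add_nonneg (psd_nonneg hN _) (integral_nonneg fun y => psd_nonneg hM _)

lemma Qf_lower (hN : N.PosSemidef) {c : ℝ}
    (hcM : ∀ x : Fin d → ℝ, c * (x ⬝ᵥ x) ≤ x ⬝ᵥ (Λ + R).mulVec x)
    {h : (Fin d → ℝ) → (Fin d → ℝ)} (hh : MemLp h 2 ν) :
    c * (∫ y, h y ⬝ᵥ h y ∂ν) ≤ Qf d ν N Λ R h := by
  have h1 : c * (∫ y, h y ⬝ᵥ h y ∂ν) = ∫ y, c * (h y ⬝ᵥ h y) ∂ν :=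
    (integral_const_mul c _).symm
  have h2 : (∫ y, c * (h y ⬝ᵥ h y) ∂ν) ≤ ∫ y, h y ⬝ᵥ (Λ + R).mulVec (h y) ∂ν :=
    integral_mono ((integrable_dot hh hh).const_mul c) (integrable_dotM _ hh hh)
      fun y => hcM (h y)
  have h3 : (0:ℝ) ≤ (fun i => ∫ y, h y i ∂ν) ⬝ᵥ N.mulVec (fun i => ∫ y, h y i ∂ν) :=
    psd_nonneg hN _
  rw [Qf, h1]
  linarith

lemma intdot_pos {h : (Fin d → ℝ) → (Fin d → ℝ)} (hh : MemLp h 2 ν)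
    (hne : ¬ (h =ᵐ[ν] 0)) : 0 < ∫ y, h y ⬝ᵥ h y ∂ν := by
  rcases lt_or_eq_of_le (integral_nonneg (f := fun y => h y ⬝ᵥ h y) fun y => dot_self_nonneg (h y)) with hlt | heq
  · exact hlt
  · exfalso
    apply hne
    have h0 : (fun y => h y ⬝ᵥ h y) =ᵐ[ν] 0 := by
      rw [← integral_eq_zero_iff_of_nonneg_ae
        (Filter.Eventually.of_forall fun y => dot_self_nonneg (h y))
        (integrable_dot hh hh)]
      exact heq.symm
    filter_upwards [h0] with y hy
    exact dotProduct_self_eq_zero.mp hy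

lemma Qf_pos (hN : N.PosSemidef) {c : ℝ} (hc : 0 < c)
    (hcM : ∀ x : Fin d → ℝ, c * (x ⬝ᵥ x) ≤ x ⬝ᵥ (Λ + R).mulVec x)
    {h : (Fin d → ℝ) → (Fin d → ℝ)} (hh : MemLp h 2 ν)
    (hne : ¬ (h =ᵐ[ν] 0)) : 0 < Qf d ν N Λ R h :=
  lt_of_lt_of_le (mul_pos hc (intdot_pos hh hne)) (Qf_lower hN hcM hh)

lemma Qf_smul (t : ℝ) {h : (Fin d → ℝ) → (Fin d → ℝ)} (hh : MemLp h 2 ν) :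
    Qf d ν N Λ R (fun y => t • h y) = t ^ 2 * Qf d ν N Λ R h := by
  have hmean : (fun i => ∫ y, (t • h y) i ∂ν) = t • (fun i => ∫ y, h y i ∂ν) := by
    funext i
    show (∫ y, t * h y i ∂ν) = t * ∫ y, h y i ∂ν
    exact integral_const_mul t _
  have hpt : ∀ y, (t • h y) ⬝ᵥ (Λ + R).mulVec (t • h y)
      = t ^ 2 * (h y ⬝ᵥ (Λ + R).mulVec (h y)) := by
    intro y
    rw [smul_dotProduct, (Λ + R).mulVec_smul, dotProduct_smul, smul_eq_mul, smul_eq_mul]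
    ring
  rw [Qf, Qf, hmean, smul_dotProduct, N.mulVec_smul, dotProduct_smul, smul_eq_mul, smul_eq_mul]
  simp_rw [hpt]
  rw [integral_const_mul]
  ring

lemma Lf_smul (t : ℝ) {b h : (Fin d → ℝ) → (Fin d → ℝ)} :
    Lf d ν N Λ R Λ' φ w b (fun y => t • h y) = t * Lf d ν N Λ R Λ' φ w b h := by
  rw [Lf, Lf]
  simp_rw [dotProduct_smul, smul_eq_mul]
  exact integral_const_mul t _

lemma Lf_zero {b h : (Fin d → ℝ) → (Fin d → ℝ)}
    (hFOC : ∀ᵐ y ∂ν, N.mulVec (fun i => ∫ y', b y' i ∂ν) + w + Λ'ᵀ.mulVec (φ y)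
      + (Λ + R).mulVec (b y) = 0) :
    Lf d ν N Λ R Λ' φ w b h = 0 := by
  rw [Lf]
  have : (fun y => (N.mulVec (fun i => ∫ y', b y' i ∂ν) + w + Λ'ᵀ.mulVec (φ y)
      + (Λ + R).mulVec (b y)) ⬝ᵥ h y) =ᵐ[ν] (fun _ => (0:ℝ)) := by
    filter_upwards [hFOC] with y hy
    rw [hy, zero_dotProduct]
  rw [integral_congr_ae this, integral_zero]
end mainsec

section mainsec2
variable {d : ℕ} {ν : Measure (Fin d → ℝ)} [IsProbabilityMeasure ν]
variable {N Λ R Λ' : Matrix (Fin d) (Fin d) ℝ} {φ : (Fin d → ℝ) → (Fin d → ℝ)} {w : Fin d → ℝ}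

lemma foc_min (hNT : Nᵀ = N) (hMT : (Λ + R)ᵀ = Λ + R) (hφ : MemLp φ 2 ν)
    (hNpsd : N.PosSemidef) (hMpsd : (Λ + R).PosSemidef)
    {a : (Fin d → ℝ) → (Fin d → ℝ)} (ha : MemLp a 2 ν)
    (hFOC : ∀ᵐ y ∂ν, N.mulVec (fun i => ∫ y', a y' i ∂ν) + w + Λ'ᵀ.mulVec (φ y)
      + (Λ + R).mulVec (a y) = 0) :
    ∀ a', MemLp a' 2 ν → quadControlFunctional d ν N Λ R Λ' φ w a
      ≤ quadControlFunctional d ν N Λ R Λ' φ w a' := by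
  intro a' ha'
  have hh : MemLp (fun y => a' y - a y) 2 ν := ha'.sub ha
  have e := expandF' (Λ' := Λ') (w := w) hNT hMT hφ ha hh
  have heq : (fun y => a y + (a' y - a y)) = a' := funext fun y => by abel
  rw [heq] at e
  rw [e, Lf_zero hFOC]
  have := Qf_nonneg (ν := ν) hNpsd hMpsd (h := fun y => a' y - a y)
  linarith

lemma min_ae (hNT : Nᵀ = N) (hMT : (Λ + R)ᵀ = Λ + R) (hφ : MemLp φ 2 ν)
    (hNpsd : N.PosSemidef) {c : ℝ} (hc : 0 < c)
    (hcM : ∀ x : Fin d → ℝ, c * (x ⬝ᵥ x) ≤ x ⬝ᵥ (Λ + R).mulVec x)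
    {a b : (Fin d → ℝ) → (Fin d → ℝ)} (ha : MemLp a 2 ν) (hb : MemLp b 2 ν)
    (hFOCb : ∀ᵐ y ∂ν, N.mulVec (fun i => ∫ y', b y' i ∂ν) + w + Λ'ᵀ.mulVec (φ y)
      + (Λ + R).mulVec (b y) = 0)
    (hle : quadControlFunctional d ν N Λ R Λ' φ w a
      ≤ quadControlFunctional d ν N Λ R Λ' φ w b) :
    a =ᵐ[ν] b := by
  have hh : MemLp (fun y => a y - b y) 2 ν := ha.sub hb
  have e := expandF' (Λ' := Λ') (w := w) hNT hMT hφ hb hh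
  have heq : (fun y => b y + (a y - b y)) = a := funext fun y => by abel
  rw [heq] at e
  rw [Lf_zero hFOCb] at e
  by_contra hne
  have hne0 : ¬ ((fun y => a y - b y) =ᵐ[ν] 0) := by
    intro h0
    apply hne
    filter_upwards [h0] with y hy
    exact sub_eq_zero.mp hy
  have := Qf_pos hNpsd hc hcM hh hne0
  linarith

lemma astar_exists (hN : N.PosSemidef) (hM : (Λ + R).PosDef) (hφ : MemLp φ 2 ν) :
    ∃ astar : (Fin d → ℝ) → (Fin d → ℝ), MemLp astar 2 ν ∧
      ∀ y, N.mulVec (fun i => ∫ y', astar y' i ∂ν) + w + Λ'ᵀ.mulVec (φ y)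
        + (Λ + R).mulVec (astar y) = 0 := by
  have hdet : IsUnit (Λ + R).det := isUnit_iff_ne_zero.mpr hM.det_pos.ne'
  have hNM : (N + (Λ + R)).PosDef := Matrix.PosDef.posSemidef_add hN hM
  have hdet2 : IsUnit (N + (Λ + R)).det := isUnit_iff_ne_zero.mpr hNM.det_pos.ne'
  set φbar : Fin d → ℝ := fun i => ∫ y, φ y i ∂ν with hφbar
  set m : Fin d → ℝ := -((N + (Λ + R))⁻¹.mulVec (w + Λ'ᵀ.mulVec φbar)) with hm
  set c0 : Fin d → ℝ := -((Λ + R)⁻¹.mulVec (N.mulVec m + w)) with hc0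
  set B : Matrix (Fin d) (Fin d) ℝ := -((Λ + R)⁻¹ * Λ'ᵀ) with hB
  set astar : (Fin d → ℝ) → (Fin d → ℝ) := fun y => c0 + B.mulVec (φ y) with hastar
  have hmem : MemLp astar 2 ν := (memLp_const c0).add (memLp_mulVec B hφ)
  have hm_eq : (N + (Λ + R)).mulVec m = -(w + Λ'ᵀ.mulVec φbar) := by
    rw [hm, Matrix.mulVec_neg, Matrix.mulVec_mulVec, Matrix.mul_nonsing_inv _ hdet2,
      Matrix.one_mulVec]
  have hMm : (Λ + R).mulVec m = -(N.mulVec m + w + Λ'ᵀ.mulVec φbar) := by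
    rw [Matrix.add_mulVec] at hm_eq
    have h1 : (Λ + R).mulVec m + (N.mulVec m + w + Λ'ᵀ.mulVec φbar) = 0 := by
      linear_combination hm_eq
    exact eq_neg_of_add_eq_zero_left h1
  have hmean_star : (fun i => ∫ y, astar y i ∂ν) = c0 + B.mulVec φbar := by
    funext i
    simp only [hastar, Pi.add_apply, mulVec, dotProduct]
    rw [integral_add (integrable_const _)
      (integrable_finset_sum _ fun j _ => (integrable_coord hφ j).const_mul _),
      integral_const, integral_finset_sum _ (fun j _ => (integrable_coord hφ j).const_mul _)]
    simp [hφbar, integral_const_mul]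
  have hmean_m : (fun i => ∫ y, astar y i ∂ν) = m := by
    rw [hmean_star]
    have h2 : c0 + B.mulVec φbar
        = -((Λ + R)⁻¹.mulVec (N.mulVec m + w + Λ'ᵀ.mulVec φbar)) := by
      rw [hc0, hB, Matrix.neg_mulVec, ← Matrix.mulVec_mulVec, ← neg_add,
        ← Matrix.mulVec_add]
    have h3 : N.mulVec m + w + Λ'ᵀ.mulVec φbar = -((Λ + R).mulVec m) := by
      rw [hMm, neg_neg]
    rw [h2, h3, Matrix.mulVec_neg, neg_neg, Matrix.mulVec_mulVec,
      Matrix.nonsing_inv_mul _ hdet, Matrix.one_mulVec]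
  refine ⟨astar, hmem, fun y => ?_⟩
  rw [hmean_m]
  simp only [hastar]
  rw [Matrix.mulVec_add]
  have hMc0 : (Λ + R).mulVec c0 = -(N.mulVec m + w) := by
    rw [hc0, Matrix.mulVec_neg, Matrix.mulVec_mulVec, Matrix.mul_nonsing_inv _ hdet,
      Matrix.one_mulVec]
  have hMB : (Λ + R).mulVec (B.mulVec (φ y)) = -(Λ'ᵀ.mulVec (φ y)) := by
    rw [hB, Matrix.neg_mulVec, Matrix.mulVec_neg, Matrix.mulVec_mulVec, ← Matrix.mul_assoc,
      Matrix.mul_nonsing_inv _ hdet, Matrix.one_mul]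
  rw [hMc0, hMB]
  abel
end mainsec2

/-- Minimization of the convex quadratic functional `F` over `L²(ν; ℝ^d)`:
`F` is (sequentially) continuous for the `L²(ν)` topology, coercive, strictly convex,
and admits a unique global minimizer characterized by the first-order condition
`N(∫ a dν) + w + Λ'ᵀ φ(y) + (Λ + R) a(y) = 0` for `ν`-a.e. `y`. -/
theorem quad_functional_minimization
    (d : ℕ) (ν : Measure (Fin d → ℝ)) [IsProbabilityMeasure ν]
    (N Λ R Λ' : Matrix (Fin d) (Fin d) ℝ)
    (hN : N.PosSemidef) (hΛ : Λ.PosSemidef) (hR : R.PosDef)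
    (φ : (Fin d → ℝ) → (Fin d → ℝ)) (hφ : MemLp φ 2 ν)
    (w : Fin d → ℝ) :
    -- sequential continuity in `L²(ν)`
    (∀ (b : ℕ → (Fin d → ℝ) → (Fin d → ℝ)) (a : (Fin d → ℝ) → (Fin d → ℝ)),
      (∀ n, MemLp (b n) 2 ν) → MemLp a 2 ν →
      Tendsto (fun n => ∫ y, (b n y - a y) ⬝ᵥ (b n y - a y) ∂ν) atTop (nhds 0) →
      Tendsto (fun n => quadControlFunctional d ν N Λ R Λ' φ w (b n)) atTop
        (nhds (quadControlFunctional d ν N Λ R Λ' φ w a)))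
    -- coercivity: `F(a) → +∞` as `‖a‖_{L²(ν)} → ∞`
    ∧ (∀ c : ℝ, ∃ ρ : ℝ, ∀ a : (Fin d → ℝ) → (Fin d → ℝ), MemLp a 2 ν →
        ρ ≤ ∫ y, a y ⬝ᵥ a y ∂ν → c ≤ quadControlFunctional d ν N Λ R Λ' φ w a)
    -- strict convexity (up to `ν`-a.e. equality)
    ∧ (∀ a b : (Fin d → ℝ) → (Fin d → ℝ), MemLp a 2 ν → MemLp b 2 ν →
        ¬ (a =ᵐ[ν] b) → ∀ t : ℝ, 0 < t → t < 1 →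
        quadControlFunctional d ν N Λ R Λ' φ w (fun y => t • a y + (1 - t) • b y)
          < t * quadControlFunctional d ν N Λ R Λ' φ w a
            + (1 - t) * quadControlFunctional d ν N Λ R Λ' φ w b)
    -- existence of a global minimizer, characterized by the first-order condition,
    -- unique up to `ν`-a.e. equality
    ∧ (∃ astar : (Fin d → ℝ) → (Fin d → ℝ), MemLp astar 2 ν ∧
        (∀ a, MemLp a 2 ν →
          quadControlFunctional d ν N Λ R Λ' φ w astar
            ≤ quadControlFunctional d ν N Λ R Λ' φ w a) ∧
        (∀ a, MemLp a 2 ν →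
          ((∀ a', MemLp a' 2 ν →
              quadControlFunctional d ν N Λ R Λ' φ w a
                ≤ quadControlFunctional d ν N Λ R Λ' φ w a')
            ↔ (∀ᵐ y ∂ν, N.mulVec (fun i => ∫ y', a y' i ∂ν) + w
                + Λ'.transpose.mulVec (φ y) + (Λ + R).mulVec (a y) = 0))) ∧
        (∀ a, MemLp a 2 ν →
          (∀ a', MemLp a' 2 ν →
            quadControlFunctional d ν N Λ R Λ' φ w a
              ≤ quadControlFunctional d ν N Λ R Λ' φ w a') →
          a =ᵐ[ν] astar)) := by
  have hMpd : (Λ + R).PosDef := Matrix.PosDef.posSemidef_add hΛ hR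
  have hMpsd : (Λ + R).PosSemidef := hMpd.posSemidef
  have hNT : Nᵀ = N := hermit_transpose hN.1
  have hMT : (Λ + R)ᵀ = Λ + R := hermit_transpose hMpd.1
  obtain ⟨c, hc, hcM⟩ := posdef_lower hMpd
  refine ⟨?_, ?_, ?_, ?_⟩
  · -- continuity
    intro bs a hbs ha hs
    set h : ℕ → (Fin d → ℝ) → (Fin d → ℝ) := fun n y => bs n y - a y with hhdef
    have hhn : ∀ n, MemLp (h n) 2 ν := fun n => (hbs n).sub ha
    have hsn : Tendsto (fun n => ∫ y, h n y ⬝ᵥ h n y ∂ν) atTop (nhds 0) := hs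
    have hcoordsq : ∀ (n : ℕ) (i : Fin d),
        (∫ y, h n y i * h n y i ∂ν) ≤ ∫ y, h n y ⬝ᵥ h n y ∂ν := fun n i =>
      integral_mono (integrable_coord_mul (hhn n) (hhn n) i i)
        (integrable_dot (hhn n) (hhn n))
        (fun y => Finset.single_le_sum (f := fun j => h n y j * h n y j)
          (fun j _ => mul_self_nonneg _) (Finset.mem_univ i))
    have hcoordsq0 : ∀ (n : ℕ) (i : Fin d), 0 ≤ ∫ y, h n y i * h n y i ∂ν :=
      fun n i => integral_nonneg fun y => mul_self_nonneg _
    have hsn0 : ∀ n, 0 ≤ ∫ y, h n y ⬝ᵥ h n y ∂ν :=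
      fun n => integral_nonneg fun y => dot_self_nonneg _
    have hcross : ∀ (u : (Fin d → ℝ) → (Fin d → ℝ)), MemLp u 2 ν → ∀ (i j : Fin d),
        Tendsto (fun n => ∫ y, u y i * h n y j ∂ν) atTop (nhds 0) := by
      intro u hu i j
      have hbnd : ∀ n, |∫ y, u y i * h n y j ∂ν|
          ≤ Real.sqrt ((∫ y, u y i * u y i ∂ν) * ∫ y, h n y ⬝ᵥ h n y ∂ν) := by
        intro n
        have h1 := integral_mul_sq_le (memLp_coord hu i) (memLp_coord (hhn n) j)
        have h2 : (∫ y, u y i * h n y j ∂ν)^2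
            ≤ (∫ y, u y i * u y i ∂ν) * ∫ y, h n y ⬝ᵥ h n y ∂ν :=
          le_trans h1 (mul_le_mul_of_nonneg_left (hcoordsq n j)
            (integral_nonneg fun y => mul_self_nonneg _))
        calc |∫ y, u y i * h n y j ∂ν|
            = Real.sqrt ((∫ y, u y i * h n y j ∂ν)^2) := (Real.sqrt_sq_eq_abs _).symm
          _ ≤ _ := Real.sqrt_le_sqrt h2
      have h0 : Tendsto (fun n => (∫ y, u y i * u y i ∂ν) * ∫ y, h n y ⬝ᵥ h n y ∂ν)
          atTop (nhds 0) := by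
        simpa using hsn.const_mul (∫ y, u y i * u y i ∂ν)
      have hlim := (Real.continuous_sqrt.tendsto 0).comp h0
      rw [Real.sqrt_zero] at hlim
      exact squeeze_zero_norm hbnd hlim
    have hprod : ∀ (i j : Fin d),
        Tendsto (fun n => ∫ y, h n y i * h n y j ∂ν) atTop (nhds 0) := by
      intro i j
      refine squeeze_zero_norm (fun n => ?_) hsn
      have h1 := integral_mul_sq_le (memLp_coord (hhn n) i) (memLp_coord (hhn n) j)
      have h2 : (∫ y, h n y i * h n y j ∂ν)^2 ≤ (∫ y, h n y ⬝ᵥ h n y ∂ν)^2 := by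
        nlinarith [hcoordsq n i, hcoordsq n j, hcoordsq0 n i, hcoordsq0 n j, h1]
      calc |∫ y, h n y i * h n y j ∂ν|
          = Real.sqrt ((∫ y, h n y i * h n y j ∂ν)^2) := (Real.sqrt_sq_eq_abs _).symm
        _ ≤ Real.sqrt ((∫ y, h n y ⬝ᵥ h n y ∂ν)^2) := Real.sqrt_le_sqrt h2
        _ = |∫ y, h n y ⬝ᵥ h n y ∂ν| := Real.sqrt_sq_eq_abs _
        _ = ∫ y, h n y ⬝ᵥ h n y ∂ν := abs_of_nonneg (hsn0 n)
    have hmean0 : ∀ i : Fin d, Tendsto (fun n => ∫ y, h n y i ∂ν) atTop (nhds 0) := by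
      intro i
      have := hcross (fun _ _ => (1:ℝ)) (memLp_const _) i i
      refine Tendsto.congr (fun n => ?_) this
      simp
    have e : ∀ n, quadControlFunctional d ν N Λ R Λ' φ w (bs n)
        = quadControlFunctional d ν N Λ R Λ' φ w a + Qf d ν N Λ R (h n)
          + 2 * Lf d ν N Λ R Λ' φ w a (h n) := by
      intro n
      have e1 := expandF' (Λ' := Λ') (w := w) hNT hMT hφ ha (hhn n)
      have heq : (fun y => a y + h n y) = bs n := funext fun y => by
        simp [hhdef]
      rw [heq] at e1
      exact e1
    refine Tendsto.congr (fun n => (e n).symm) ?_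
    have hQm : Tendsto (fun n => (fun i => ∫ y, h n y i ∂ν) ⬝ᵥ
        N.mulVec (fun i => ∫ y, h n y i ∂ν)) atTop (nhds 0) := by
      simp only [dot_mulVec_eq']
      have : Tendsto (fun n => ∑ i, ∑ j, N i j * ((∫ y, h n y i ∂ν) * (∫ y, h n y j ∂ν)))
          atTop (nhds (∑ i : Fin d, ∑ j : Fin d, N i j * (0 * 0))) :=
        tendsto_finset_sum _ fun i _ => tendsto_finset_sum _ fun j _ =>
          ((hmean0 i).mul (hmean0 j)).const_mul _
      simpa using this
    have hQi : Tendsto (fun n => ∫ y, h n y ⬝ᵥ (Λ + R).mulVec (h n y) ∂ν)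
        atTop (nhds 0) := by
      have hrw : ∀ n, (∫ y, h n y ⬝ᵥ (Λ + R).mulVec (h n y) ∂ν)
          = ∑ i, ∑ j, (Λ + R) i j * ∫ y, h n y i * h n y j ∂ν :=
        fun n => integral_dotM _ (hhn n) (hhn n)
      refine Tendsto.congr (fun n => (hrw n).symm) ?_
      have : Tendsto (fun n => ∑ i, ∑ j, (Λ + R) i j * ∫ y, h n y i * h n y j ∂ν)
          atTop (nhds (∑ i : Fin d, ∑ j : Fin d, (Λ + R) i j * 0)) :=
        tendsto_finset_sum _ fun i _ => tendsto_finset_sum _ fun j _ =>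
          (hprod i j).const_mul _
      simpa using this
    have hQ : Tendsto (fun n => Qf d ν N Λ R (h n)) atTop (nhds 0) := by
      simpa [Qf] using hQm.add hQi
    have hG : MemLp (fun y => N.mulVec (fun i => ∫ y', a y' i ∂ν) + w
        + Λ'ᵀ.mulVec (φ y) + (Λ + R).mulVec (a y)) 2 ν :=
      ((memLp_const (N.mulVec (fun i => ∫ y', a y' i ∂ν) + w)).add (memLp_mulVec Λ'ᵀ hφ)).add (memLp_mulVec (Λ + R) ha)
    have hL : Tendsto (fun n => Lf d ν N Λ R Λ' φ w a (h n)) atTop (nhds 0) := by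
      have hrw : ∀ n, Lf d ν N Λ R Λ' φ w a (h n)
          = ∑ i, ∫ y, (N.mulVec (fun i => ∫ y', a y' i ∂ν) + w
            + Λ'ᵀ.mulVec (φ y) + (Λ + R).mulVec (a y)) i * h n y i ∂ν := by
        intro n
        rw [Lf]
        exact integral_dot_eq hG (hhn n)
      refine Tendsto.congr (fun n => (hrw n).symm) ?_
      have : Tendsto (fun n => ∑ i, ∫ y, (N.mulVec (fun i => ∫ y', a y' i ∂ν) + w
          + Λ'ᵀ.mulVec (φ y) + (Λ + R).mulVec (a y)) i * h n y i ∂ν)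
          atTop (nhds (∑ i : Fin d, 0)) :=
        tendsto_finset_sum _ fun i _ => hcross _ hG i i
      simpa using this
    have final := ((tendsto_const_nhds
      (x := quadControlFunctional d ν N Λ R Λ' φ w a) (f := atTop)).add hQ).add
      (hL.const_mul 2)
    simpa using final
  · -- coercivity
    intro c₀
    set g : (Fin d → ℝ) → (Fin d → ℝ) := fun y => w + Λ'ᵀ.mulVec (φ y) with hgdef
    have hg : MemLp g 2 ν := (memLp_const w).add (memLp_mulVec Λ'ᵀ hφ)
    set Kg : ℝ := ∫ y, g y ⬝ᵥ g y ∂ν with hKg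
    have hKg0 : 0 ≤ Kg := integral_nonneg fun y => dot_self_nonneg _
    refine ⟨max 0 ((c₀ + (2/c)*Kg) * (2/c)), fun a ha hra => ?_⟩
    have hmean_w : w ⬝ᵥ (fun i => ∫ y, a y i ∂ν) = ∫ y, w ⬝ᵥ a y ∂ν :=
      (integral_const_dot w ha).symm
    have hphiterm : (∫ y, φ y ⬝ᵥ Λ'.mulVec (a y) ∂ν)
        = ∫ y, Λ'ᵀ.mulVec (φ y) ⬝ᵥ a y ∂ν := by
      have hp : ∀ y, φ y ⬝ᵥ Λ'.mulVec (a y) = Λ'ᵀ.mulVec (φ y) ⬝ᵥ a y :=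
        fun y => (transpose_dot Λ' (φ y) (a y)).symm
      simp_rw [hp]
    have hpt : ∀ y, (c/2) * (a y ⬝ᵥ a y) - (2/c) * (g y ⬝ᵥ g y)
        ≤ 2 * (g y ⬝ᵥ a y) + a y ⬝ᵥ (Λ + R).mulVec (a y) := by
      intro y
      have h1 := hcM (a y)
      have h2 : 0 ≤ (c/2) * (a y ⬝ᵥ a y) + 2*(g y ⬝ᵥ a y) + (2/c) * (g y ⬝ᵥ g y) := by
        have hsum : (c/2) * (a y ⬝ᵥ a y) + 2*(g y ⬝ᵥ a y) + (2/c) * (g y ⬝ᵥ g y)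
            = ∑ i, ((c/2) * (a y i * a y i) + 2 * (g y i * a y i)
              + (2/c) * (g y i * g y i)) := by
          simp only [dotProduct, Finset.mul_sum, Finset.sum_add_distrib]
        rw [hsum]
        refine Finset.sum_nonneg fun i _ => ?_
        have hcc : 0 < c/2 := by linarith
        have key : (c/2) * (a y i + (2/c) * g y i)^2
            = c/2 * (a y i * a y i) + 2 * (g y i * a y i) + 2/c * (g y i * g y i) := by
          field_simp
          ring
        rw [← key]
        positivity
      linarith
    have hintle : (c/2) * (∫ y, a y ⬝ᵥ a y ∂ν) - (2/c)*Kg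
        ≤ 2 * (∫ y, g y ⬝ᵥ a y ∂ν) + ∫ y, a y ⬝ᵥ (Λ + R).mulVec (a y) ∂ν := by
      have hsub : Integrable (fun y => (c/2) * (a y ⬝ᵥ a y) - (2/c) * (g y ⬝ᵥ g y)) ν :=
        ((integrable_dot ha ha).const_mul (c/2)).sub
          ((integrable_dot hg hg).const_mul (2/c))
      have hadd : Integrable (fun y => 2 * (g y ⬝ᵥ a y) + a y ⬝ᵥ (Λ + R).mulVec (a y)) ν :=
        ((integrable_dot hg ha).const_mul 2).add (integrable_dotM _ ha ha)
      have hmono := integral_mono hsub hadd hpt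
      rw [integral_sub ((integrable_dot ha ha).const_mul (c/2))
          ((integrable_dot hg hg).const_mul (2/c)),
        integral_add ((integrable_dot hg ha).const_mul 2) (integrable_dotM _ ha ha),
        integral_const_mul, integral_const_mul, integral_const_mul] at hmono
      exact hmono
    have hcomb : 2 * (w ⬝ᵥ (fun i => ∫ y, a y i ∂ν))
        + 2 * (∫ y, φ y ⬝ᵥ Λ'.mulVec (a y) ∂ν) = 2 * ∫ y, g y ⬝ᵥ a y ∂ν := by
      have i1 : Integrable (fun y => w ⬝ᵥ a y) ν := integrable_dot (memLp_const w) ha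
      have i2 : Integrable (fun y => Λ'ᵀ.mulVec (φ y) ⬝ᵥ a y) ν :=
        integrable_dot (memLp_mulVec Λ'ᵀ hφ) ha
      have h12 : (∫ y, g y ⬝ᵥ a y ∂ν)
          = (∫ y, w ⬝ᵥ a y ∂ν) + ∫ y, Λ'ᵀ.mulVec (φ y) ⬝ᵥ a y ∂ν := by
        have hp2 : ∀ y, g y ⬝ᵥ a y = w ⬝ᵥ a y + Λ'ᵀ.mulVec (φ y) ⬝ᵥ a y := by
          intro y
          rw [hgdef]
          exact add_dotProduct _ _ _
        simp_rw [hp2]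
        exact integral_add i1 i2
      rw [hmean_w, hphiterm, h12]
      ring
    have hNmean : 0 ≤ (fun i => ∫ y, a y i ∂ν) ⬝ᵥ N.mulVec (fun i => ∫ y, a y i ∂ν) :=
      psd_nonneg hN _
    have hs0 : (c₀ + (2/c)*Kg) * (2/c) ≤ ∫ y, a y ⬝ᵥ a y ∂ν :=
      le_trans (le_max_right _ _) hra
    have hkey : c₀ + (2/c)*Kg ≤ (c/2) * ∫ y, a y ⬝ᵥ a y ∂ν := by
      have := mul_le_mul_of_nonneg_left hs0 (by linarith : (0:ℝ) ≤ c/2)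
      have heq2 : (c/2) * ((c₀ + (2/c)*Kg) * (2/c)) = c₀ + (2/c)*Kg := by
        field_simp
      linarith [heq2 ▸ this]
    rw [quadControlFunctional]
    linarith [hintle, hcomb, hNmean, hkey]
  · -- strict convexity
    intro a b ha hb hne t ht0 ht1
    have hh : MemLp (fun y => a y - b y) 2 ν := ha.sub hb
    have hth : MemLp (fun y => t • (a y - b y)) 2 ν := hh.const_smul t
    have e1 := expandF' (Λ' := Λ') (w := w) hNT hMT hφ hb hth
    have hconv : (fun y => b y + t • (a y - b y)) = (fun y => t • a y + (1 - t) • b y) :=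
      funext fun y => by
        rw [smul_sub, sub_smul, one_smul]
        abel
    rw [hconv] at e1
    have e2 := expandF' (Λ' := Λ') (w := w) hNT hMT hφ hb hh
    have heq2 : (fun y => b y + (a y - b y)) = a := funext fun y => by abel
    rw [heq2] at e2
    have hQs := Qf_smul (N := N) (Λ := Λ) (R := R) t hh
    have hLs := Lf_smul (ν := ν) (N := N) (Λ := Λ) (R := R) (Λ' := Λ') (φ := φ) (w := w) t
      (b := b) (h := fun y => a y - b y)
    rw [hQs, hLs] at e1
    have hne0 : ¬ ((fun y => a y - b y) =ᵐ[ν] 0) := by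
      intro h0
      apply hne
      filter_upwards [h0] with y hy
      exact sub_eq_zero.mp hy
    have hQpos := Qf_pos hN hc hcM hh hne0
    nlinarith [e1, e2, hQpos, mul_pos ht0 (by linarith : (0:ℝ) < 1 - t)]
  · -- existence / characterization / uniqueness
    obtain ⟨astar, hstar, hFOCstar⟩ := astar_exists (Λ' := Λ') (w := w) hN hMpd hφ
    have hFOCae : ∀ᵐ y ∂ν, N.mulVec (fun i => ∫ y', astar y' i ∂ν) + w
        + Λ'ᵀ.mulVec (φ y) + (Λ + R).mulVec (astar y) = 0 :=
      Filter.Eventually.of_forall hFOCstar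
    refine ⟨astar, hstar, foc_min hNT hMT hφ hN hMpsd hstar hFOCae, ?_, ?_⟩
    · intro a ha
      constructor
      · intro hmin
        have hle := hmin astar hstar
        have hae := min_ae hNT hMT hφ hN hc hcM ha hstar hFOCae hle
        have hmean_eq : (fun i => ∫ y', a y' i ∂ν) = (fun i => ∫ y', astar y' i ∂ν) :=
          funext fun i => integral_congr_ae (by
            filter_upwards [hae] with y hy
            rw [hy])
        filter_upwards [hae] with y hy
        rw [hmean_eq, hy]
        exact hFOCstar y
      · intro hfoc
        exact foc_min hNT hMT hφ hN hMpsd ha hfoc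
    · intro a ha hmin
      exact min_ae hNT hMT hφ hN hc hcM ha hstar hFOCae (hmin astar hstar)
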